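/- If G is a strictly m-degenerate finite simple graph and t_1, t_2, …, t_κ are nonnegative integers with t_1 + t_2 + ⋯ + t_κ ≥ m, then G is (t_1, t_2, …, t_κ)-partitionable; that is, V(G) can be partitioned into sets V_1, …, V_κ such that G[V_i] is strictly t_i-degenerate for each i ∈ [κ]. -/

import Mathlib

open SimpleGraph

universe u

/-- `H` is a cover of `G` with `κ` parts: every edge of `H` joins distinct fibres
`X_u`, `X_v` with `uv ∈ E(G)` (in particular each fibre is independent), and the
edges between two fibres form a (possibly empty) matching. -/
def IsCover {V : Type u} (κ : ℕ) (G : SimpleGraph V) (H : SimpleGraph (V × Fin κ)) : Prop :=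
  (∀ (u v : V) (p q : Fin κ), H.Adj (u, p) (v, q) → G.Adj u v) ∧
  (∀ (u v : V) (p q q' : Fin κ), H.Adj (u, p) (v, q) → H.Adj (u, p) (v, q') → q = q')

/-- The subgraph of `Γ` induced on `R` is strictly `f`-degenerate: every nonempty
subgraph with vertices inside `R` has a vertex whose degree there is `< f`. -/
def StrictlyFDegenerateOn {α : Type u} (Γ : SimpleGraph α) (f : α → ℕ) (R : Set α) : Prop :=
  ∀ S : Set α, S ⊆ R → S.Nonempty → ∃ x ∈ S, (S ∩ {y | Γ.Adj x y}).ncard < f x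

/-- `R` is a transversal of a cover with fibres `X_v = {v} × Fin κ`. -/
def IsTransversal {V : Type u} {κ : ℕ} (R : Set (V × Fin κ)) : Prop :=
  ∀ v : V, ∃! p : Fin κ, (v, p) ∈ R

/-- `H` has a strictly `f`-degenerate transversal. -/
def HasSFDTransversal {V : Type u} {κ : ℕ} (H : SimpleGraph (V × Fin κ))
    (f : V × Fin κ → ℕ) : Prop :=
  ∃ R : Set (V × Fin κ), IsTransversal R ∧ StrictlyFDegenerateOn H f R



open SimpleGraph

private lemma key_lemma {V : Type} [Fintype V] (G : SimpleGraph V) (m : ℕ)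
    (hG : StrictlyFDegenerateOn G (fun _ => m) Set.univ) (κ : ℕ) [NeZero κ]
    (t : Fin κ → ℕ) (ht : m ≤ ∑ i : Fin κ, t i) (s : Finset V) :
    ∃ P : V → Fin κ, ∀ S : Set V, S ⊆ ↑s → S.Nonempty →
      ∃ x ∈ S, (S ∩ {y | G.Adj x y} ∩ {y | P y = P x}).ncard < t (P x) := by
  classical
  induction s using Finset.strongInduction with
  | _ s IH =>
    rcases s.eq_empty_or_nonempty with rfl | hne
    · refine ⟨fun _ => 0, ?_⟩
      intro S hS ⟨y, hy⟩
      exact absurd (hS hy) (by simp)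
    · obtain ⟨x, hxs, hxdeg⟩ := hG ↑s (Set.subset_univ _) (by exact_mod_cast hne)
      obtain ⟨P, hP⟩ := IH (s.erase x) (Finset.erase_ssubset (by exact_mod_cast hxs))
      set Nf : Finset V := (s.erase x).filter (fun y => G.Adj x y) with hNf
      have hNcard : Nf.card < m := by
        calc Nf.card ≤ (s.filter (fun y => G.Adj x y)).card :=
              Finset.card_le_card (Finset.filter_subset_filter _ (Finset.erase_subset _ _))
          _ = ((↑s : Set V) ∩ {y | G.Adj x y}).ncard := by
              rw [← Set.ncard_coe_finset]
              congr 1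
              ext y
              simp [Finset.mem_filter, Set.mem_inter_iff]
          _ < m := hxdeg
      have hpig : ∃ i : Fin κ, (Nf.filter (fun y => P y = i)).card < t i := by
        by_contra h
        push_neg at h
        have hsum : Nf.card = ∑ i : Fin κ, (Nf.filter (fun y => P y = i)).card :=
          Finset.card_eq_sum_card_fiberwise (fun y _ => Finset.mem_univ (P y))
        have : ∑ i : Fin κ, t i ≤ Nf.card := by
          rw [hsum]; exact Finset.sum_le_sum (fun i _ => h i)
        omega
      obtain ⟨i, hi⟩ := hpig
      refine ⟨Function.update P x i, ?_⟩
      intro S hS hSne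
      by_cases hxS : x ∈ S
      · refine ⟨x, hxS, ?_⟩
        rw [Function.update_self]
        have hsub : S ∩ {y | G.Adj x y} ∩ {y | Function.update P x i y = i} ⊆
            ↑(Nf.filter (fun y => P y = i)) := by
          rintro y ⟨⟨hyS, hyadj⟩, hyi⟩
          have hyx : y ≠ x := fun h => G.loopless.irrefl x (h ▸ hyadj)
          replace hyi : P y = i := by
            simpa [Function.update_of_ne hyx] using hyi
          simp only [Finset.coe_filter, Set.mem_setOf_eq, hNf, Finset.mem_filter,
            Finset.mem_erase]
          have hys : y ∈ s := hS hyS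
          tauto
        calc (S ∩ {y | G.Adj x y} ∩ {y | Function.update P x i y = i}).ncard
            ≤ (↑(Nf.filter (fun y => P y = i)) : Set V).ncard :=
              Set.ncard_le_ncard hsub (Set.toFinite _)
          _ = (Nf.filter (fun y => P y = i)).card := Set.ncard_coe_finset _
          _ < t i := hi
      · have hS' : S ⊆ ↑(s.erase x) := by
          intro y hy
          simp only [Finset.coe_erase, Set.mem_diff, Set.mem_singleton_iff]
          exact ⟨hS hy, by rintro rfl; exact hxS hy⟩
        obtain ⟨x', hx'S, hx'⟩ := hP S hS' hSne
        have hx'x : x' ≠ x := by rintro rfl; exact hxS hx'S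
        have hupd : ∀ y ∈ S, Function.update P x i y = P y := by
          intro y hy
          exact Function.update_of_ne (by rintro rfl; exact hxS hy) _ _
        refine ⟨x', hx'S, ?_⟩
        rw [hupd x' hx'S]
        have : S ∩ {y | G.Adj x' y} ∩ {y | Function.update P x i y = P x'} =
            S ∩ {y | G.Adj x' y} ∩ {y | P y = P x'} := by
          ext y
          simp only [Set.mem_inter_iff, Set.mem_setOf_eq]
          constructor
          · rintro ⟨⟨h1, h2⟩, h3⟩; exact ⟨⟨h1, h2⟩, (hupd y h1) ▸ h3⟩
          · rintro ⟨⟨h1, h2⟩, h3⟩; exact ⟨⟨h1, h2⟩, (hupd y h1).symm ▸ h3⟩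
        rw [this]
        exact hx'

theorem partitionable_of_strictlyDegenerate
    {V : Type} [Fintype V] (G : SimpleGraph V) (m : ℕ)
    (hG : StrictlyFDegenerateOn G (fun _ => m) Set.univ) (κ : ℕ)
    (t : Fin κ → ℕ) (ht : m ≤ ∑ i : Fin κ, t i) :
    ∃ P : V → Fin κ, ∀ i : Fin κ,
      StrictlyFDegenerateOn G (fun _ => t i) {v : V | P v = i} := by
  classical
  rcases Nat.eq_zero_or_pos κ with rfl | hκ
  · -- κ = 0 forces m = 0 and V empty
    have hm : m = 0 := by simpa using ht
    have hV : IsEmpty V := by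
      by_contra h
      rw [not_isEmpty_iff] at h
      obtain ⟨v⟩ := h
      obtain ⟨x, _, hx⟩ := hG Set.univ subset_rfl ⟨v, trivial⟩
      simp only [hm] at hx
      exact absurd hx (Nat.not_lt_zero _)
    exact ⟨fun v => (hV.false v).elim, fun i => i.elim0⟩
  · have : NeZero κ := ⟨hκ.ne'⟩
    obtain ⟨P, hP⟩ := key_lemma G m hG κ t ht Finset.univ
    refine ⟨P, fun i S hS hSne => ?_⟩
    obtain ⟨x, hxS, hx⟩ := hP S (by simp) hSne
    have hPx : P x = i := hS hxS
    refine ⟨x, hxS, ?_⟩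
    have : S ∩ {y | G.Adj x y} ∩ {y | P y = P x} = S ∩ {y | G.Adj x y} := by
      ext y
      simp only [Set.mem_inter_iff, Set.mem_setOf_eq]
      constructor
      · rintro ⟨h1, _⟩; exact h1
      · rintro ⟨h1, h2⟩; exact ⟨⟨h1, h2⟩, (hS h1).trans hPx.symm⟩
    rw [this] at hx
    rwa [hPx] at hx
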